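/- arXiv:1103.1060 — 2 statements merged into one kernel-verified Lean document; each statement's English description precedes it below -/
import Mathlib

section
/- Let f : ℕ^ℕ → ℕ^ℕ be a homeomorphism onto its image Y arising from a Cantor-type scheme {Y_s} with Y_{s⌢k} covered by pairwise disjoint clopen sets, and suppose that for every s ∈ ℕ^{<ω}, any sequence of points x_k ∈ Y_{s⌢k} (k ∈ ℕ) has no convergent subsequence in ℕ^ℕ. Then Y is closed in ℕ^ℕ. -/
/-- The restriction x↾m of x ∈ ℕ^ℕ, as a finite string. -/
def res (x : ℕ → ℕ) (m : ℕ) : List ℕ := List.ofFn fun i : Fin m => x i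

/-- A tree on ℕ: a set of finite strings closed under initial segments. -/
def IsTree (T : Set (List ℕ)) : Prop := ∀ s : List ℕ, ∀ n : ℕ, s ++ [n] ∈ T → s ∈ T

/-- A pruned tree: every node has an immediate successor in the tree. -/
def Pruned (T : Set (List ℕ)) : Prop := ∀ s ∈ T, ∃ n : ℕ, s ++ [n] ∈ T

/-- Finitely branching: every node has only finitely many immediate successors. -/
def FinBranching (T : Set (List ℕ)) : Prop := ∀ s ∈ T, {n : ℕ | s ++ [n] ∈ T}.Finite

/-- [T], the set of infinite branches of T. -/
def Branches (T : Set (List ℕ)) : Set (ℕ → ℕ) := {x | ∀ m : ℕ, res x m ∈ T}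

/-- tree(X), the tree of finite initial segments of elements of X. -/
def treeOf (X : Set (ℕ → ℕ)) : Set (List ℕ) := {s | ∃ x ∈ X, ∃ n : ℕ, s = res x n}

/-- The Baire interval (basic clopen set) N_t. -/
def Cyl (t : List ℕ) : Set (ℕ → ℕ) := {x | res x t.length = t}

/-- s is a branching point of T. -/
def Branching (T : Set (List ℕ)) (s : List ℕ) : Prop :=
  s ∈ T ∧ ∃ k n : ℕ, k ≠ n ∧ s ++ [k] ∈ T ∧ s ++ [n] ∈ T

/-- A perfect tree: every node extends to a branching node. -/
def PerfectTree (T : Set (List ℕ)) : Prop := ∀ s ∈ T, ∃ t, s <+: t ∧ Branching T t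

/-- X is σ-compact: a countable union of compact sets. -/
def SigmaCpt (X : Set (ℕ → ℕ)) : Prop :=
  ∃ K : ℕ → Set (ℕ → ℕ), (∀ n, IsCompact (K n)) ∧ X = ⋃ n, K n

/-- A tree on ℕ × ℕ: pairs of strings of equal length, closed under initial segments. -/
def IsTree2 (S : Set (List ℕ × List ℕ)) : Prop :=
  (∀ p ∈ S, p.1.length = p.2.length) ∧
  ∀ u v : List ℕ, ∀ n m : ℕ, (u ++ [n], v ++ [m]) ∈ S → (u, v) ∈ S

/-- The set of branches of a tree on pairs. -/
def Branches2 (S : Set (List ℕ × List ℕ)) : Set ((ℕ → ℕ) × (ℕ → ℕ)) :=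
  {p | ∀ n : ℕ, (res p.1 n, res p.2 n) ∈ S}

/-- A_{uv}: the projection of the part of [S] above the node (u,v). -/
def projAbove (S : Set (List ℕ × List ℕ)) (u v : List ℕ) : Set (ℕ → ℕ) :=
  {x | ∃ y : ℕ → ℕ, (x, y) ∈ Branches2 S ∧ res x u.length = u ∧ res y v.length = v}

/-- An ideal on ℕ containing all finite sets. -/
def IsIdealN (I : Set (Set ℕ)) : Prop :=
  ∅ ∈ I ∧ (∀ a ∈ I, ∀ b : Set ℕ, b ⊆ a → b ∈ I) ∧ (∀ a ∈ I, ∀ b ∈ I, a ∪ b ∈ I) ∧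
  ∀ a : Set ℕ, a.Finite → a ∈ I

/-- X ⊆ ℕ^ℕ is I-small: every node of tree(X) has successor set in I. -/
def ISmall (I : Set (Set ℕ)) (X : Set (ℕ → ℕ)) : Prop :=
  ∀ s ∈ treeOf X, {n : ℕ | s ++ [n] ∈ treeOf X} ∈ I

/-- X is σ-I-small: a countable union of I-small sets. -/
def SigmaISmall (I : Set (Set ℕ)) (X : Set (ℕ → ℕ)) : Prop :=
  ∃ Z : ℕ → Set (ℕ → ℕ), (∀ n, ISmall I (Z n)) ∧ X = ⋃ n, Z n


section Helpers

private lemma res_succ' (x : ℕ → ℕ) (m : ℕ) : res x (m+1) = res x m ++ [x m] := by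
  rw [res, List.ofFn_succ']
  simp [res]

private lemma res_coord' {x y : ℕ → ℕ} {m i : ℕ} (h : res x m = res y m) (hi : i < m) :
    x i = y i := by
  have := List.ofFn_inj.mp h
  exact congrFun this ⟨i, hi⟩

private lemma res_getD' (t : List ℕ) : res (fun i => t.getD i 0) t.length = t := by
  apply List.ext_getElem <;> simp [res]

private lemma exists_chain' {α : Type*} (g : ℕ → α → α → Prop) (a0 : α)
    (h : ∀ n x, ∃ y, g n x y) :
    ∃ c : ℕ → α, c 0 = a0 ∧ ∀ m, g m (c m) (c (m+1)) := by
  choose F hF using h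
  exact ⟨fun m => Nat.rec a0 F m, rfl, fun m => hF m _⟩

end Helpers

theorem image_closed_of_divergent_scheme (Y : List ℕ → Set (ℕ → ℕ))
    (f : (ℕ → ℕ) → (ℕ → ℕ))
    (hmono : ∀ s : List ℕ, ∀ i : ℕ, Y (s ++ [i]) ⊆ Y s)
    (hdiam : ∀ s : List ℕ, ∀ x ∈ Y s, ∀ y ∈ Y s, res x s.length = res y s.length)
    (hdisj : ∀ s : List ℕ, ∃ J : ℕ → List ℕ,
      (∀ k : ℕ, Y (s ++ [k]) ⊆ Cyl (J k)) ∧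
      ∀ k l : ℕ, k ≠ l → Disjoint (Cyl (J k)) (Cyl (J l)))
    (hint : ∀ a : ℕ → ℕ, (⋂ m : ℕ, Y (res a m)) = {f a})
    (hemb : Topology.IsEmbedding f)
    (hnoconv : ∀ s : List ℕ, ∀ x : ℕ → (ℕ → ℕ), (∀ k : ℕ, x k ∈ Y (s ++ [k])) →
      ¬ ∃ (φ : ℕ → ℕ) (L : ℕ → ℕ), StrictMono φ ∧
        Filter.Tendsto (fun k => x (φ k)) Filter.atTop (nhds L)) :
    IsClosed (Set.range f) := by
  classical
  have hYne : ∀ t : List ℕ, (Y t).Nonempty := by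
    intro t
    refine ⟨f (fun i => t.getD i 0), ?_⟩
    have h1 : f (fun i => t.getD i 0) ∈ ⋂ m : ℕ, Y (res (fun i => t.getD i 0) m) := by
      rw [hint]; rfl
    have h2 := Set.mem_iInter.mp h1 t.length
    rwa [res_getD'] at h2
  have hmemY : ∀ (b : ℕ → ℕ) (m : ℕ), f b ∈ Y (res b m) := by
    intro b m
    have h1 : f b ∈ ⋂ m : ℕ, Y (res b m) := by rw [hint]; rfl
    exact Set.mem_iInter.mp h1 m
  apply IsSeqClosed.isClosed
  intro u y hu hlim
  choose a hfa using hu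
  have hfl : Filter.Tendsto (fun n => f (a n)) Filter.atTop (nhds y) :=
    hlim.congr (fun n => (hfa n).symm)
  by_cases hcase : ∃ (s : List ℕ) (N : Set ℕ), N.Infinite ∧
      (∀ n ∈ N, res (a n) s.length = s) ∧ ∀ k, {n ∈ N | a n s.length = k}.Finite
  · exfalso
    obtain ⟨s, N, hNinf, hconst, hfib⟩ := hcase
    set m := s.length with hm
    set K : Set ℕ := {k | ∃ n ∈ N, a n m = k} with hKdef
    have hKinf : K.Infinite := by
      intro hKfin
      apply hNinf
      have hsub : N ⊆ ⋃ k ∈ K, {n ∈ N | a n m = k} := by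
        intro n hn
        exact Set.mem_biUnion ⟨n, hn, rfl⟩ ⟨hn, rfl⟩
      exact (hKfin.biUnion (fun k _ => hfib k)).subset hsub
    have hsel : ∀ k ∈ K, ∃ n, n ∈ N ∧ a n m = k := by
      intro k hk
      obtain ⟨n, hn, h⟩ := hk
      exact ⟨n, hn, h⟩
    set nsel : ℕ → ℕ := fun k => if h : k ∈ K then (hsel k h).choose else 0 with hnseldef
    have hnsel_spec : ∀ k ∈ K, nsel k ∈ N ∧ a (nsel k) m = k := by
      intro k hk
      simp only [hnseldef, dif_pos hk]
      exact (hsel k hk).choose_spec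
    set x : ℕ → (ℕ → ℕ) :=
      fun k => if k ∈ K then f (a (nsel k)) else (hYne (s ++ [k])).some with hxdef
    have hxk : ∀ k, x k ∈ Y (s ++ [k]) := by
      intro k
      by_cases hk : k ∈ K
      · obtain ⟨hmem, hval⟩ := hnsel_spec k hk
        have hres : res (a (nsel k)) (m + 1) = s ++ [k] := by
          rw [res_succ', hconst _ hmem, hval]
        simp only [hxdef, if_pos hk]
        rw [← hres]
        exact hmemY _ _
      · simp only [hxdef, if_neg hk]
        exact (hYne (s ++ [k])).some_mem
    apply hnoconv s x hxk
    set φ : ℕ → ℕ := Nat.nth (· ∈ K) with hφdef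
    have hφK : ∀ j, φ j ∈ K := fun j => Nat.nth_mem_of_infinite hKinf j
    have hφmono : StrictMono φ := Nat.nth_strictMono hKinf
    refine ⟨φ, y, hφmono, ?_⟩
    have hginj : Function.Injective (fun j => nsel (φ j)) := by
      intro i j hij
      apply hφmono.injective
      have h1 := (hnsel_spec _ (hφK i)).2
      have h2 := (hnsel_spec _ (hφK j)).2
      simp only at hij
      rw [← h1, ← h2, hij]
    have hgt : Filter.Tendsto (fun j => nsel (φ j)) Filter.atTop Filter.atTop := by
      rw [← Nat.cofinite_eq_atTop]
      exact hginj.tendsto_cofinite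
    have htend : Filter.Tendsto (fun j => f (a (nsel (φ j)))) Filter.atTop (nhds y) :=
      hfl.comp hgt
    exact htend.congr fun j => by simp only [hxdef, if_pos (hφK j)]
  · -- build a convergent subsequence, then y = f L ∈ range f
    have Hstep : ∀ (s : List ℕ) (N : Set ℕ), N.Infinite →
        (∀ n ∈ N, res (a n) s.length = s) →
        ∃ k, {n ∈ N | a n s.length = k}.Infinite := by
      intro s N hN hres
      by_contra h
      push_neg at h
      exact hcase ⟨s, N, hN, hres, fun k => h k⟩
    set Pp : List ℕ × Set ℕ → Prop :=
      fun p => p.2.Infinite ∧ ∀ n ∈ p.2, res (a n) p.1.length = p.1 with hPpdef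
    have h0 : Pp ([], Set.univ) := ⟨Set.infinite_univ, fun n _ => by simp [res]⟩
    have hnext : ∀ (j : ℕ) (p : {p // Pp p}), ∃ q : {p // Pp p},
        (∃ k, q.1.1 = p.1.1 ++ [k]) ∧ q.1.2 ⊆ p.1.2 := by
      rintro j ⟨⟨s, N⟩, hN, hres⟩
      obtain ⟨k, hk⟩ := Hstep s N hN hres
      refine ⟨⟨(s ++ [k], {n ∈ N | a n s.length = k}), hk, ?_⟩, ⟨k, rfl⟩, Set.sep_subset _ _⟩
      rintro n ⟨hn1, hn2⟩
      have hl : (s ++ [k]).length = s.length + 1 := by simp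
      rw [hl, res_succ', hres n hn1, hn2]
    obtain ⟨c, hc0, hcstep⟩ := exists_chain'
      (fun _ (p q : {p // Pp p}) => (∃ k, q.1.1 = p.1.1 ++ [k]) ∧ q.1.2 ⊆ p.1.2)
      ⟨([], Set.univ), h0⟩ hnext
    have hlen : ∀ m', ((c m').1.1).length = m' := by
      intro m'
      induction m' with
      | zero => simp [hc0]
      | succ k ih =>
        obtain ⟨kk, hkk⟩ := (hcstep k).1
        rw [hkk]
        simp [ih]
    have hsuble : ∀ i j, i ≤ j → (c j).1.2 ⊆ (c i).1.2 := by
      intro i j hij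
      induction hij with
      | refl => exact subset_rfl
      | step _ ih => exact ((hcstep _).2).trans ih
    have hne : ∀ m', ((c m').1.2).Nonempty := fun m' => ((c m').2.1).nonempty
    set pick : ℕ → ℕ := fun m' => (hne m').some with hpickdef
    have hpick : ∀ m', pick m' ∈ (c m').1.2 := fun m' => (hne m').some_mem
    set L : ℕ → ℕ := fun i => a (pick (i+1)) i with hLdef
    have hcoord : ∀ i, ∀ n ∈ (c (i+1)).1.2, a n i = L i := by
      intro i n hn
      have h1 := (c (i+1)).2.2 n hn
      have h2 := (c (i+1)).2.2 _ (hpick (i+1))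
      have hi : i < ((c (i+1)).1.1).length := by rw [hlen]; omega
      simp only [hLdef]
      exact res_coord' (h1.trans h2.symm) hi
    -- choose a strictly increasing subsequence ψ with ψ j ∈ (c (j+1)).1.2
    have hgt : ∀ (j : ℕ) (b : ℕ), ∃ n, n ∈ (c (j+2)).1.2 ∧ b < n := by
      intro j b
      obtain ⟨n, hn, hbn⟩ := ((c (j+2)).2.1).exists_gt b
      exact ⟨n, hn, hbn⟩
    obtain ⟨ψ, hψ0, hψstep⟩ := exists_chain'
      (fun j (b b' : ℕ) => b' ∈ (c (j+2)).1.2 ∧ b < b') (pick 1) hgt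
    have hψmem : ∀ j, ψ j ∈ (c (j+1)).1.2 := by
      intro j
      cases j with
      | zero => rw [hψ0]; exact hpick 1
      | succ k => exact (hψstep k).1
    have hψmono : StrictMono ψ := strictMono_nat_of_lt_succ fun j => (hψstep j).2
    have hconv : Filter.Tendsto (fun j => a (ψ j)) Filter.atTop (nhds L) := by
      rw [tendsto_pi_nhds]
      intro i
      apply Filter.Tendsto.congr' _ (tendsto_const_nhds (x := L i))
      filter_upwards [Filter.eventually_ge_atTop i] with j hj
      exact (hcoord i (ψ j) (hsuble (i+1) (j+1) (by omega) (hψmem j))).symm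
    have h1 : Filter.Tendsto (fun j => f (a (ψ j))) Filter.atTop (nhds (f L)) :=
      (hemb.continuous.tendsto L).comp hconv
    have h2 : Filter.Tendsto (fun j => f (a (ψ j))) Filter.atTop (nhds y) :=
      hfl.comp hψmono.tendsto_atTop
    exact ⟨L, (tendsto_nhds_unique h2 h1).symm⟩
end

section
/- (Hurewicz dichotomy for closed sets, one direction) If F ⊆ ℕ^ℕ is closed and not σ-compact, then F contains a closed subset homeomorphic to ℕ^ℕ. Specifically, taking T = tree(F), the subtree of nodes u ∈ T such that [T_u] is not σ-compact is a nonempty pruned tree with an infinitely branching node above every node, yielding a closed copy of ℕ^ℕ inside F. -/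
namespace HW

@[simp] lemma res_length (x : ℕ → ℕ) (m : ℕ) : (res x m).length = m := by
  simp [res]

@[simp] lemma res_zero (x : ℕ → ℕ) : res x 0 = [] := by simp [res]

lemma res_succ (x : ℕ → ℕ) (m : ℕ) : res x (m+1) = res x m ++ [x m] := by
  have := List.ofFn_succ' (fun i : Fin (m+1) => x i)
  simp only [res, this, List.concat_eq_append, Fin.val_last]
  congr 1

lemma res_getElem (x : ℕ → ℕ) {m i : ℕ} (h : i < m) :
    (res x m)[i]'(by simpa using h) = x i := by
  simp [res]

lemma res_prefix (x : ℕ → ℕ) {k m : ℕ} (h : k ≤ m) : res x k <+: res x m := by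
  induction m with
  | zero => simp_all
  | succ m ih =>
    rcases Nat.eq_or_lt_of_le h with rfl | h'
    · exact List.prefix_refl _
    · exact (ih (Nat.lt_succ_iff.mp h')).trans (by rw [res_succ]; exact List.prefix_append _ _)

lemma res_eq_iff {x y : ℕ → ℕ} {m : ℕ} : res x m = res y m ↔ ∀ i < m, x i = y i := by
  constructor
  · intro h i hi
    have := congrArg (fun l => l[i]?) h
    simpa [res, hi] using this
  · intro h
    apply List.ext_getElem (by simp)
    intro i h1 h2
    simp only [res, List.getElem_ofFn]
    exact h i (by simpa using h1)

lemma eq_res_of_prefix {x : ℕ → ℕ} {t : List ℕ} {m : ℕ} (h : t <+: res x m) :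
    t = res x t.length := by
  have hl : t.length ≤ m := by simpa using h.length_le
  apply List.ext_getElem (by simp)
  intro i h1 h2
  rw [h.getElem h1, res_getElem x (lt_of_lt_of_le h1 hl), res_getElem x (by simpa using h1)]

lemma prefix_iff_res {x : ℕ → ℕ} {t : List ℕ} {m : ℕ} (hl : t.length ≤ m) :
    t <+: res x m ↔ res x t.length = t :=
  ⟨fun h => (eq_res_of_prefix h).symm, fun h => h ▸ res_prefix x hl⟩

lemma mem_Cyl {x : ℕ → ℕ} {t : List ℕ} : x ∈ Cyl t ↔ res x t.length = t := Iff.rfl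

lemma res_mem_Cyl {x : ℕ → ℕ} {m : ℕ} : x ∈ Cyl (res x m) := by
  simp [mem_Cyl]

lemma isOpen_resSet (k : ℕ) (A : Set (List ℕ)) : IsOpen {x : ℕ → ℕ | res x k ∈ A} := by
  have hc : Continuous (fun x : ℕ → ℕ => (fun i : Fin k => x i)) :=
    continuous_pi fun i => continuous_apply _
  have : {x : ℕ → ℕ | res x k ∈ A} =
      (fun x : ℕ → ℕ => (fun i : Fin k => x i)) ⁻¹' {v | List.ofFn v ∈ A} := rfl
  rw [this]
  exact (isOpen_discrete _).preimage hc

lemma isOpen_Cyl (t : List ℕ) : IsOpen (Cyl t) := by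
  have : Cyl t = {x : ℕ → ℕ | res x t.length ∈ ({t} : Set (List ℕ))} := by
    ext x; simp [Cyl]
  rw [this]; exact isOpen_resSet _ _

lemma isClosed_Cyl (t : List ℕ) : IsClosed (Cyl t) := by
  rw [← isOpen_compl_iff]
  have : (Cyl t)ᶜ = {x : ℕ → ℕ | res x t.length ∈ ({t} : Set (List ℕ))ᶜ} := by
    ext x; simp [Cyl]
  rw [this]; exact isOpen_resSet _ _

lemma isClosed_Branches (T : Set (List ℕ)) : IsClosed (Branches T) := by
  rw [← isOpen_compl_iff]
  have : (Branches T)ᶜ = ⋃ m, {x : ℕ → ℕ | res x m ∈ Tᶜ} := by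
    ext x; simp [Branches]
  rw [this]
  exact isOpen_iUnion fun m => isOpen_resSet _ _

lemma res_mem_treeOf {X : Set (ℕ → ℕ)} {x : ℕ → ℕ} (hx : x ∈ X) (m : ℕ) :
    res x m ∈ treeOf X := ⟨x, hx, m, rfl⟩

lemma mem_treeOf_iff {X : Set (ℕ → ℕ)} {t : List ℕ} :
    t ∈ treeOf X ↔ ∃ x ∈ X, res x t.length = t := by
  constructor
  · rintro ⟨x, hx, n, rfl⟩; exact ⟨x, hx, by simp⟩
  · rintro ⟨x, hx, h⟩; exact ⟨x, hx, t.length, h.symm⟩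

lemma branches_treeOf_subset {F : Set (ℕ → ℕ)} (hF : IsClosed F) :
    Branches (treeOf F) ⊆ F := by
  intro z hz
  choose xm hxm hres using fun m => mem_treeOf_iff.mp (hz m)
  have htend : Filter.Tendsto xm Filter.atTop (nhds z) := by
    rw [tendsto_pi_nhds]
    intro i
    apply Filter.Tendsto.congr' _ (tendsto_const_nhds (x := z i))
    filter_upwards [Filter.eventually_ge_atTop (i+1)] with m hm
    have := hres m
    rw [res_length] at this
    exact (res_eq_iff.mp this i (by omega)).symm
  exact hF.mem_of_tendsto htend (Filter.Eventually.of_forall hxm)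

lemma mem_branches_treeOf {F : Set (ℕ → ℕ)} (hF : IsClosed F) {z : ℕ → ℕ} :
    z ∈ Branches (treeOf F) ↔ z ∈ F :=
  ⟨fun h => branches_treeOf_subset hF h, fun h m => res_mem_treeOf h m⟩

lemma tree_prefix_closed {T : Set (List ℕ)} (hT : IsTree T) :
    ∀ t ∈ T, ∀ s, s <+: t → s ∈ T := by
  intro t
  induction t using List.reverseRecOn with
  | nil => intro ht s hs; rwa [List.prefix_nil.mp hs]
  | append_singleton t n ih =>
    intro ht s hs
    rcases List.prefix_concat_iff.mp hs with rfl | hs'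
    · exact ht
    · exact ih (hT t n ht) s hs'

/- σ-compactness toolkit -/
lemma sigmaCpt_empty : SigmaCpt ∅ :=
  ⟨fun _ => ∅, fun _ => isCompact_empty, by simp⟩

lemma sigmaCpt_of_isCompact {K : Set (ℕ → ℕ)} (h : IsCompact K) : SigmaCpt K :=
  ⟨fun _ => K, fun _ => h, (Set.iUnion_const K).symm⟩

lemma sigmaCpt_nonempty_of_not {X : Set (ℕ → ℕ)} (h : ¬ SigmaCpt X) : X.Nonempty := by
  rcases X.eq_empty_or_nonempty with rfl | hne
  · exact absurd sigmaCpt_empty h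
  · exact hne

lemma sigmaCpt_inter_closed {X C : Set (ℕ → ℕ)} (hX : SigmaCpt X) (hC : IsClosed C) :
    SigmaCpt (X ∩ C) := by
  obtain ⟨K, hK, rfl⟩ := hX
  exact ⟨fun n => K n ∩ C, fun n => (hK n).inter_right hC, by rw [Set.iUnion_inter]⟩

lemma sigmaCpt_iUnion {ι : Type} [Countable ι] (X : ι → Set (ℕ → ℕ))
    (h : ∀ i, SigmaCpt (X i)) : SigmaCpt (⋃ i, X i) := by
  cases isEmpty_or_nonempty ι
  · simp only [Set.iUnion_of_empty]; exact sigmaCpt_empty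
  · obtain ⟨f, hf⟩ := exists_surjective_nat ι
    choose K hK hX using h
    refine ⟨fun p => K (f (Nat.unpair p).1) (Nat.unpair p).2, fun p => hK _ _, ?_⟩
    ext z
    simp only [Set.mem_iUnion]
    constructor
    · rintro ⟨i, hi⟩
      obtain ⟨n, rfl⟩ := hf i
      rw [hX] at hi
      obtain ⟨m, hm⟩ := Set.mem_iUnion.mp hi
      exact ⟨Nat.pair n m, by simpa using hm⟩
    · rintro ⟨p, hp⟩
      exact ⟨f (Nat.unpair p).1, by rw [hX]; exact Set.mem_iUnion.mpr ⟨_, hp⟩⟩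

lemma sigmaCpt_union {X Y : Set (ℕ → ℕ)} (hX : SigmaCpt X) (hY : SigmaCpt Y) :
    SigmaCpt (X ∪ Y) := by
  have := sigmaCpt_iUnion (fun b : Bool => if b then X else Y)
    (by rintro (_|_) <;> simpa)
  have e : (⋃ b : Bool, if b = true then X else Y) = X ∪ Y := by
    ext z; simp [Set.mem_iUnion, Bool.exists_bool, or_comm]
  rwa [e] at this

end HW

namespace HW
section Part1
variable {F : Set (ℕ → ℕ)} {S : Set (List ℕ)}

lemma Cyl_nil : Cyl ([] : List ℕ) = Set.univ := by
  ext x; simp [Cyl]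

lemma Cyl_mono {u t : List ℕ} (h : u <+: t) : Cyl t ⊆ Cyl u := by
  intro x hx
  rw [mem_Cyl] at hx ⊢
  have h2 : u <+: res x t.length := by rw [hx]; exact h
  exact (eq_res_of_prefix h2).symm

lemma cyl_step {u : List ℕ} {x : ℕ → ℕ} (hx : x ∈ Cyl u) :
    res x (u.length + 1) = u ++ [x u.length] := by
  rw [res_succ, mem_Cyl.mp hx]

lemma mem_S_iff (hS : S = {u | u ∈ treeOf F ∧ ¬ SigmaCpt (F ∩ Cyl u)}) {u : List ℕ} :
    u ∈ S ↔ u ∈ treeOf F ∧ ¬ SigmaCpt (F ∩ Cyl u) := by rw [hS]; rfl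

lemma FCyl_sigma_of_not_mem_S (hF : IsClosed F)
    (hS : S = {u | u ∈ treeOf F ∧ ¬ SigmaCpt (F ∩ Cyl u)}) {t : List ℕ} (ht : t ∉ S) :
    SigmaCpt (F ∩ Cyl t) := by
  by_cases htF : t ∈ treeOf F
  · by_contra h
    exact ht ((mem_S_iff hS).mpr ⟨htF, h⟩)
  · have : F ∩ Cyl t = ∅ := by
      ext x
      simp only [Set.mem_inter_iff, Set.mem_empty_iff_false, iff_false, not_and]
      intro hxF hxC
      exact htF (by rw [← mem_Cyl.mp hxC]; exact res_mem_treeOf hxF _)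
    rw [this]; exact sigmaCpt_empty

lemma S_nonempty (hns : ¬ SigmaCpt F)
    (hS : S = {u | u ∈ treeOf F ∧ ¬ SigmaCpt (F ∩ Cyl u)}) : S.Nonempty := by
  obtain ⟨x, hx⟩ := sigmaCpt_nonempty_of_not hns
  refine ⟨[], (mem_S_iff hS).mpr ⟨⟨x, hx, 0, by simp⟩, ?_⟩⟩
  rwa [Cyl_nil, Set.inter_univ]

lemma S_tree (hS : S = {u | u ∈ treeOf F ∧ ¬ SigmaCpt (F ∩ Cyl u)}) : IsTree S := by
  intro s n hsn
  rw [mem_S_iff hS] at hsn ⊢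
  obtain ⟨⟨x, hx, m, hm⟩, hns⟩ := hsn
  have hlen : m = s.length + 1 := by
    have := congrArg List.length hm; simp at this; omega
  subst hlen
  have hpre : s <+: res x (s.length+1) := hm ▸ List.prefix_append s [n]
  have hs : s = res x s.length := by
    have := eq_res_of_prefix hpre; simpa using this
  refine ⟨⟨x, hx, s.length, hs⟩, fun hsc => hns ?_⟩
  have : F ∩ Cyl (s ++ [n]) = (F ∩ Cyl s) ∩ Cyl (s ++ [n]) := by
    rw [Set.inter_assoc, Set.inter_eq_right.mpr (Cyl_mono (List.prefix_append s [n]))]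
  rw [this]
  exact sigmaCpt_inter_closed hsc (isClosed_Cyl _)

lemma FCyl_decomp (u : List ℕ) : F ∩ Cyl u = ⋃ n, F ∩ Cyl (u ++ [n]) := by
  ext x
  simp only [Set.mem_inter_iff, Set.mem_iUnion]
  constructor
  · rintro ⟨hxF, hxC⟩
    refine ⟨x u.length, hxF, ?_⟩
    rw [mem_Cyl]
    have : (u ++ [x u.length]).length = u.length + 1 := by simp
    rw [this, cyl_step hxC]
  · rintro ⟨n, hxF, hxC⟩
    exact ⟨hxF, Cyl_mono (List.prefix_append u [n]) hxC⟩

lemma S_pruned (hS : S = {u | u ∈ treeOf F ∧ ¬ SigmaCpt (F ∩ Cyl u)}) : Pruned S := by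
  intro u hu
  rw [mem_S_iff hS] at hu
  by_contra h
  push_neg at h
  apply hu.2
  rw [FCyl_decomp u]
  apply sigmaCpt_iUnion
  intro n
  by_cases hn : SigmaCpt (F ∩ Cyl (u ++ [n]))
  · exact hn
  · exfalso
    obtain ⟨x, hxF, hxC⟩ := sigmaCpt_nonempty_of_not hn
    refine (h n) ((mem_S_iff hS).mpr ⟨?_, hn⟩)
    rw [mem_treeOf_iff]
    exact ⟨x, hxF, mem_Cyl.mp hxC⟩

end Part1
end HW

namespace HW
section Part1b
variable {F : Set (ℕ → ℕ)} {S : Set (List ℕ)}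

lemma res_take {x : ℕ → ℕ} {k m : ℕ} (h : k ≤ m) : (res x m).take k = res x k := by
  obtain ⟨t, ht⟩ := res_prefix x h
  rw [← ht]
  simpa using List.take_left (res x k) t

lemma S_infbranch (hF : IsClosed F)
    (hS : S = {u | u ∈ treeOf F ∧ ¬ SigmaCpt (F ∩ Cyl u)}) :
    ∀ u ∈ S, ∃ t ∈ S, u <+: t ∧ {n : ℕ | t ++ [n] ∈ S}.Infinite := by
  classical
  intro u hu
  by_contra hcon
  push_neg at hcon
  have H : ∀ t ∈ S, u <+: t → {n : ℕ | t ++ [n] ∈ S}.Finite := by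
    intro t ht hut
    have := hcon t ht hut
    first | exact this | rwa [Set.not_infinite] at this
  -- the "all nodes above u stay in S" part
  set B : Set (ℕ → ℕ) := (F ∩ Cyl u) ∩ ⋂ m, {x | res x (u.length + m) ∈ S} with hB
  have hBsub : ∀ x ∈ B, ∀ m, u.length ≤ m → res x m ∈ S ∧ u <+: res x m := by
    intro x hx m hm
    have h1 : res x m ∈ S := by
      have := hx.2
      rw [Set.mem_iInter] at this
      have := this (m - u.length)
      simpa [Nat.add_sub_cancel' hm] using this
    have h2 : u <+: res x m := by
      have : res x u.length = u := mem_Cyl.mp hx.1.2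
      rw [← this]
      exact res_prefix x hm
    exact ⟨h1, h2⟩
  have hBclosed : IsClosed B := by
    refine IsClosed.inter (hF.inter (isClosed_Cyl u)) (isClosed_iInter fun m => ?_)
    rw [← isOpen_compl_iff]
    have : {x : ℕ → ℕ | res x (u.length + m) ∈ S}ᶜ
        = {x : ℕ → ℕ | res x (u.length + m) ∈ Sᶜ} := rfl
    rw [this]
    exact isOpen_resSet _ _
  have hR : ∀ m, ((fun x => res x m) '' B).Finite := by
    intro m
    induction m with
    | zero =>
      apply Set.Finite.subset (Set.finite_singleton ([] : List ℕ))
      rintro t ⟨x, _, rfl⟩; simp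
    | succ m ih =>
      by_cases hm : u.length ≤ m
      · have : (fun x => res x (m+1)) '' B ⊆
            ⋃ t ∈ (fun x => res x m) '' B, (fun n => t ++ [n]) '' {n | t ++ [n] ∈ S} := by
          rintro _ ⟨x, hx, rfl⟩
          rw [Set.mem_iUnion₂]
          refine ⟨res x m, ⟨x, hx, rfl⟩, x m, ?_, (res_succ x m).symm⟩
          have h1 : res x (m+1) ∈ S := (hBsub x hx (m+1) (by omega)).1
          rw [res_succ] at h1
          exact h1
        apply Set.Finite.subset _ this
        apply Set.Finite.biUnion ih
        intro t ht
        obtain ⟨x, hx, rfl⟩ := ht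
        obtain ⟨h1, h2⟩ := hBsub x hx m hm
        exact Set.Finite.image _ (H _ h1 h2)
      · apply Set.Finite.subset (Set.finite_singleton (u.take (m+1)))
        rintro _ ⟨x, hx, rfl⟩
        have hxc : res x u.length = u := mem_Cyl.mp hx.1.2
        rw [Set.mem_singleton_iff, ← hxc, res_take (by omega)]
  have hBcpt : IsCompact B := by
    set C : ℕ → Set ℕ := fun i => (fun t => t.getD i 0) '' ((fun x => res x (i+1)) '' B) with hC
    have hsub : B ⊆ Set.pi Set.univ C := by
      intro x hx
      rw [Set.mem_univ_pi]
      intro i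
      refine ⟨res x (i+1), ⟨x, hx, rfl⟩, ?_⟩
      show (res x (i+1)).getD i 0 = x i
      rw [List.getD_eq_getElem _ _ (by simp), res_getElem x (by omega)]
    exact IsCompact.of_isClosed_subset
      (isCompact_univ_pi fun i => (((hR (i+1)).image _).isCompact)) hBclosed hsub
  -- decomposition
  have hdecomp : F ∩ Cyl u = B ∪ ⋃ (t : List ℕ),
      (if t ∉ S ∧ u <+: t then F ∩ Cyl t else ∅) := by
    ext x
    constructor
    · intro hx
      by_cases hxB : ∀ m, res x (u.length + m) ∈ S
      · exact Or.inl ⟨hx, Set.mem_iInter.mpr hxB⟩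
      · push_neg at hxB
        obtain ⟨m, hm⟩ := hxB
        refine Or.inr (Set.mem_iUnion.mpr ⟨res x (u.length + m), ?_⟩)
        have hut : u <+: res x (u.length + m) := by
          rw [← mem_Cyl.mp hx.2]
          exact res_prefix x (by simp)
        rw [if_pos ⟨hm, hut⟩]
        exact ⟨hx.1, res_mem_Cyl⟩
    · rintro (hx | hx)
      · exact hx.1
      · obtain ⟨t, hxt⟩ := Set.mem_iUnion.mp hx
        by_cases hc : t ∉ S ∧ u <+: t
        · rw [if_pos hc] at hxt
          exact ⟨hxt.1, Cyl_mono hc.2 hxt.2⟩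
        · rw [if_neg hc] at hxt
          exact absurd hxt (Set.notMem_empty x)
  apply ((mem_S_iff hS).mp hu).2
  rw [hdecomp]
  apply sigmaCpt_union (sigmaCpt_of_isCompact hBcpt)
  apply sigmaCpt_iUnion
  intro t
  by_cases hc : t ∉ S ∧ u <+: t
  · rw [if_pos hc]
    exact FCyl_sigma_of_not_mem_S hF hS hc.1
  · rw [if_neg hc]
    exact sigmaCpt_empty

end Part1b
end HW

namespace HW

/-! ### Part 2: construction of a closed copy of Baire space -/

def good (S : Set (List ℕ)) (t : List ℕ) : Prop :=
  t ∈ S ∧ {n : ℕ | t ++ [n] ∈ S}.Infinite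

open Classical in
noncomputable def ext (S : Set (List ℕ)) (u : List ℕ) : List ℕ :=
  if h : ∃ t, good S t ∧ u <+: t then h.choose else u

lemma ext_spec {S : Set (List ℕ)} {u : List ℕ} (h : ∃ t, good S t ∧ u <+: t) :
    good S (ext S u) ∧ u <+: ext S u := by
  classical
  rw [ext]
  rw [dif_pos h]
  exact ⟨h.choose_spec.1, h.choose_spec.2⟩

open Classical in
noncomputable def enum (S : Set (List ℕ)) (t : List ℕ) (n : ℕ) : ℕ :=
  if h : {n : ℕ | t ++ [n] ∈ S}.Infinite
  then (Set.Infinite.natEmbedding _ h n : ℕ) else n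

lemma enum_mem {S : Set (List ℕ)} {t : List ℕ} (h : {n : ℕ | t ++ [n] ∈ S}.Infinite)
    (n : ℕ) : t ++ [enum S t n] ∈ S := by
  classical
  simp only [enum, dif_pos h]
  exact (Set.Infinite.natEmbedding _ h n).2

lemma enum_inj {S : Set (List ℕ)} {t : List ℕ} (h : {n : ℕ | t ++ [n] ∈ S}.Infinite)
    {a b : ℕ} (hab : enum S t a = enum S t b) : a = b := by
  classical
  simp only [enum, dif_pos h] at hab
  exact (Set.Infinite.natEmbedding _ h).injective (Subtype.ext hab)

noncomputable def phiAux (S : Set (List ℕ)) : List ℕ → List ℕ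
  | [] => ext S []
  | n :: r => ext S (phiAux S r ++ [enum S (phiAux S r) n])

noncomputable def phi (S : Set (List ℕ)) (s : List ℕ) : List ℕ := phiAux S s.reverse

lemma phi_nil (S : Set (List ℕ)) : phi S [] = ext S [] := rfl

lemma phi_concat (S : Set (List ℕ)) (s : List ℕ) (n : ℕ) :
    phi S (s ++ [n]) = ext S (phi S s ++ [enum S (phi S s) n]) := by
  simp [phi, phiAux]

section Part2
variable {S : Set (List ℕ)}
  (htree : IsTree S) (hnil : [] ∈ S)
  (hgood : ∀ u ∈ S, ∃ t, good S t ∧ u <+: t)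

include htree hnil hgood

lemma good_phi : ∀ s : List ℕ, good S (phi S s) := by
  intro s
  induction s using List.reverseRecOn with
  | nil => exact (ext_spec (hgood [] hnil)).1
  | append_singleton s n ih =>
    rw [phi_concat]
    have hmem : phi S s ++ [enum S (phi S s) n] ∈ S := enum_mem ih.2 n
    exact (ext_spec (hgood _ hmem)).1

lemma phi_extend (s : List ℕ) (n : ℕ) :
    phi S s ++ [enum S (phi S s) n] <+: phi S (s ++ [n]) := by
  rw [phi_concat]
  have hmem : phi S s ++ [enum S (phi S s) n] ∈ S :=
    enum_mem (good_phi htree hnil hgood s).2 n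
  exact (ext_spec (hgood _ hmem)).2

lemma phi_mem : ∀ s, phi S s ∈ S := fun s => (good_phi htree hnil hgood s).1

lemma phi_mono : ∀ {s t : List ℕ}, s <+: t → phi S s <+: phi S t := by
  intro s t
  induction t using List.reverseRecOn with
  | nil => intro h; rw [List.prefix_nil.mp h]
  | append_singleton t n ih =>
    intro h
    rcases List.prefix_concat_iff.mp h with rfl | h'
    · exact List.prefix_refl _
    · refine (ih h').trans ?_
      exact (List.prefix_append _ _).trans (phi_extend htree hnil hgood t n)

lemma phi_concat_length (s : List ℕ) (n : ℕ) :
    (phi S s).length < (phi S (s ++ [n])).length := by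
  have := (phi_extend htree hnil hgood s n).length_le
  simp only [List.length_append, List.length_cons, List.length_nil] at this
  omega

lemma phi_length_ge : ∀ s : List ℕ, s.length ≤ (phi S s).length := by
  intro s
  induction s using List.reverseRecOn with
  | nil => simp
  | append_singleton s n ih =>
    have := phi_concat_length htree hnil hgood s n
    simp only [List.length_append, List.length_cons, List.length_nil]
    omega

lemma phi_strict {s t : List ℕ} (h : s <+: t) (hne : s ≠ t) :
    (phi S s).length < (phi S t).length := by
  obtain ⟨r, rfl⟩ := h
  rcases r with _ | ⟨n, r'⟩
  · simp at hne
  · have h1 : s ++ [n] <+: s ++ n :: r' := by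
      simpa using (List.prefix_append [n] r')
    calc (phi S s).length < (phi S (s ++ [n])).length :=
          phi_concat_length htree hnil hgood s n
      _ ≤ (phi S (s ++ n :: r')).length := (phi_mono htree hnil hgood h1).length_le

omit htree hnil hgood in
lemma exists_concat_prefix {s t : List ℕ} (h : s <+: t) (hne : s ≠ t) :
    ∃ n, s ++ [n] <+: t := by
  obtain ⟨r, rfl⟩ := h
  rcases r with _ | ⟨n, r'⟩
  · simp at hne
  · exact ⟨n, by simpa using (List.prefix_append [n] r')⟩

lemma phi_concat_getElem (s : List ℕ) (n : ℕ) :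
    (phi S (s ++ [n]))[(phi S s).length]'(by
      simpa using phi_concat_length htree hnil hgood s n)
      = enum S (phi S s) n := by
  have h := phi_extend htree hnil hgood s n
  have hlen : (phi S s).length < (phi S s ++ [enum S (phi S s) n]).length := by simp
  rw [← h.getElem hlen]
  simp

lemma phi_prefix_getElem {s t : List ℕ} (n : ℕ) (h : s ++ [n] <+: t) :
    (phi S t)[(phi S s).length]'(by
      have h1 := phi_concat_length htree hnil hgood s n
      have h2 := (phi_mono htree hnil hgood h).length_le
      omega)
      = enum S (phi S s) n := by
  have hm := phi_mono htree hnil hgood h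
  have hlen : (phi S s).length < (phi S (s ++ [n])).length := by
    simpa using phi_concat_length htree hnil hgood s n
  rw [← hm.getElem hlen]
  exact phi_concat_getElem htree hnil hgood s n

/-- The central comparability lemma. -/
lemma phi_comp : ∀ N : ℕ, ∀ s t : List ℕ, s.length + t.length ≤ N →
    phi S s <+: phi S t → s <+: t ∨ t <+: s := by
  intro N
  induction N with
  | zero =>
    intro s t hlen _
    have : s = [] := by
      cases s <;> simp_all
    exact Or.inl (this ▸ List.nil_prefix)
  | succ N ih =>
    intro s t hlen hst
    rcases List.eq_nil_or_concat s with rfl | ⟨s', n, rfl⟩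
    · exact Or.inl List.nil_prefix
    rcases List.eq_nil_or_concat t with rfl | ⟨t', m, rfl⟩
    · exact Or.inr List.nil_prefix
    simp only [List.concat_eq_append] at hlen hst ⊢
    -- phi s' and phi t' are both prefixes of phi (t' ++ [m])
    have hs's : phi S s' <+: phi S (s' ++ [n]) :=
      phi_mono htree hnil hgood (List.prefix_append _ _)
    have ht't : phi S t' <+: phi S (t' ++ [m]) :=
      phi_mono htree hnil hgood (List.prefix_append _ _)
    have hcmp : phi S s' <+: phi S t' ∨ phi S t' <+: phi S s' :=
      List.prefix_or_prefix_of_prefix (hs's.trans hst) ht't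
    have hlen' : s'.length + t'.length ≤ N := by
      simp only [List.length_append, List.length_cons, List.length_nil] at hlen; omega
    have hcc : s' <+: t' ∨ t' <+: s' := by
      rcases hcmp with h | h
      · exact ih s' t' hlen' h
      · exact (ih t' s' (by omega) h).symm
    -- key entry comparisons
    have hLs : (phi S s').length < (phi S (s' ++ [n])).length :=
      phi_concat_length htree hnil hgood s' n
    have hentry : ∀ (i : ℕ) (hi1 : i < (phi S (s' ++ [n])).length)
        (hi2 : i < (phi S (t' ++ [m])).length),
        (phi S (s' ++ [n]))[i]'hi1 = (phi S (t' ++ [m]))[i]'hi2 :=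
      fun i hi1 hi2 => hst.getElem hi1
    rcases hcc with hct | hct
    · rcases eq_or_ne s' t' with rfl | hne
      · -- same parent: compare the enum entries
        have e1 := phi_concat_getElem htree hnil hgood s' n
        have e2 := phi_concat_getElem htree hnil hgood s' m
        have : enum S (phi S s') n = enum S (phi S s') m := by
          rw [← e1, ← e2]
          exact hentry _ _ _
        have := enum_inj (good_phi htree hnil hgood s').2 this
        subst this
        exact Or.inl (List.prefix_refl _)
      · -- s' strictly below t'
        obtain ⟨k, hk⟩ := exists_concat_prefix hct hne
        have e1 := phi_concat_getElem htree hnil hgood s' n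
        have e2 := phi_prefix_getElem htree hnil hgood k
          (hk.trans (List.prefix_append t' [m]))
        have : enum S (phi S s') n = enum S (phi S s') k := by
          rw [← e1, ← e2]
          exact hentry _ _ _
        have := enum_inj (good_phi htree hnil hgood s').2 this
        subst this
        exact Or.inl (hk.trans (List.prefix_append _ _))
    · rcases eq_or_ne t' s' with rfl | hne
      · have e1 := phi_concat_getElem htree hnil hgood t' n
        have e2 := phi_concat_getElem htree hnil hgood t' m
        have : enum S (phi S t') n = enum S (phi S t') m := by
          rw [← e1, ← e2]
          exact hentry _ _ _
        have := enum_inj (good_phi htree hnil hgood t').2 this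
        subst this
        exact Or.inl (List.prefix_refl _)
      · -- t' strictly below s'
        obtain ⟨k, hk⟩ := exists_concat_prefix hct hne
        have e1 := phi_concat_getElem htree hnil hgood t' m
        have e2 := phi_prefix_getElem htree hnil hgood k
          (hk.trans (List.prefix_append s' [n]))
        have : enum S (phi S t') k = enum S (phi S t') m := by
          rw [← e2, ← e1]
          exact hentry _ _ _
        have := enum_inj (good_phi htree hnil hgood t').2 this
        subst this
        exact Or.inr (hk.trans (List.prefix_append _ _))

lemma phi_comparable {s t : List ℕ} (h : s <+: t ∨ t <+: s) :
    phi S s <+: phi S t ∨ phi S t <+: phi S s := by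
  rcases h with h | h
  · exact Or.inl (phi_mono htree hnil hgood h)
  · exact Or.inr (phi_mono htree hnil hgood h)

end Part2

noncomputable def ff (S : Set (List ℕ)) (x : ℕ → ℕ) : ℕ → ℕ :=
  fun i => (phi S (res x (i+1))).getD i 0

lemma cyl_comparable {z : ℕ → ℕ} {a b : List ℕ} (ha : z ∈ Cyl a) (hb : z ∈ Cyl b) :
    a <+: b ∨ b <+: a := by
  rcases le_total a.length b.length with h | h
  · left
    rw [← mem_Cyl.mp ha, ← mem_Cyl.mp hb]
    exact res_prefix z h
  · right
    rw [← mem_Cyl.mp ha, ← mem_Cyl.mp hb]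
    exact res_prefix z h

section Part2b
variable {S : Set (List ℕ)}
  (htree : IsTree S) (hnil : [] ∈ S)
  (hgood : ∀ u ∈ S, ∃ t, good S t ∧ u <+: t)
include htree hnil hgood

lemma phi_res_comparable (x : ℕ → ℕ) (k m : ℕ) :
    phi S (res x k) <+: phi S (res x m) ∨ phi S (res x m) <+: phi S (res x k) := by
  rcases le_total k m with h | h
  · exact Or.inl (phi_mono htree hnil hgood (res_prefix x h))
  · exact Or.inr (phi_mono htree hnil hgood (res_prefix x h))

lemma ff_getElem (x : ℕ → ℕ) {m i : ℕ} (hi : i < (phi S (res x m)).length) :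
    ff S x i = (phi S (res x m))[i]'hi := by
  have hi1 : i < (phi S (res x (i+1))).length := by
    have h := phi_length_ge htree hnil hgood (res x (i+1))
    rw [res_length] at h
    omega
  have : ff S x i = (phi S (res x (i+1)))[i]'hi1 := by
    rw [ff, List.getD_eq_getElem _ _ hi1]
  rw [this]
  rcases phi_res_comparable htree hnil hgood x (i+1) m with h | h
  · exact h.getElem hi1
  · exact (h.getElem hi).symm

lemma ff_in_cyl (x : ℕ → ℕ) (m : ℕ) : ff S x ∈ Cyl (phi S (res x m)) := by
  rw [mem_Cyl]
  apply List.ext_getElem (by simp)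
  intro i h1 h2
  rw [res_getElem _ (by simpa using h1)]
  exact ff_getElem htree hnil hgood x h2

lemma ff_res_prefix (x : ℕ → ℕ) (k : ℕ) : res (ff S x) k <+: phi S (res x k) := by
  have h1 : k ≤ (phi S (res x k)).length := by
    have := phi_length_ge htree hnil hgood (res x k); rwa [res_length] at this
  have h2 := mem_Cyl.mp (ff_in_cyl htree hnil hgood x k)
  calc res (ff S x) k <+: res (ff S x) (phi S (res x k)).length := res_prefix _ h1
    _ = phi S (res x k) := h2

lemma ff_branches (x : ℕ → ℕ) : ff S x ∈ Branches S := by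
  intro m
  exact tree_prefix_closed htree _ (phi_mem htree hnil hgood (res x m)) _
    (ff_res_prefix htree hnil hgood x m)

lemma ff_coord (x : ℕ → ℕ) (i : ℕ) :
    ff S x ((phi S (res x i)).length) = enum S (phi S (res x i)) (x i) := by
  have hconc : res x (i+1) = res x i ++ [x i] := res_succ x i
  have hlt : (phi S (res x i)).length < (phi S (res x i ++ [x i])).length :=
    phi_concat_length htree hnil hgood _ _
  have h1 : ff S x ((phi S (res x i)).length)
      = (phi S (res x i ++ [x i]))[(phi S (res x i)).length]'hlt := by
    have h2 := ff_getElem htree hnil hgood x (m := i+1)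
      (i := (phi S (res x i)).length) (by rw [hconc]; exact hlt)
    simp only [hconc] at h2
    exact h2
  rw [h1, phi_concat_getElem htree hnil hgood]

lemma ff_inj : Function.Injective (ff S) := by
  intro x y hxy
  funext i
  induction i using Nat.strong_induction_on with
  | _ i ih =>
    have hres : res x i = res y i := res_eq_iff.mpr fun j hj => ih j hj
    have h1 := ff_coord htree hnil hgood x i
    have h2 := ff_coord htree hnil hgood y i
    rw [← hres] at h2
    rw [hxy, h2] at h1
    exact (enum_inj (good_phi htree hnil hgood (res x i)).2 h1.symm)

end Part2b

/-- The tree of prefixes of φ-values. -/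
def Tstar (S : Set (List ℕ)) : Set (List ℕ) := {t | ∃ s, t <+: phi S s}

section Part2c
variable {S : Set (List ℕ)}
  (htree : IsTree S) (hnil : [] ∈ S)
  (hgood : ∀ u ∈ S, ∃ t, good S t ∧ u <+: t)
include htree hnil hgood

lemma range_ff_subset : Set.range (ff S) ⊆ Branches (Tstar S) := by
  rintro _ ⟨x, rfl⟩ k
  exact ⟨res x k, ff_res_prefix htree hnil hgood x k⟩

omit htree hnil hgood in
lemma prefix_eq_of_length {a b : List ℕ} (ha : a <+: b ∨ b <+: a)
    (h : a.length = b.length) : a = b := by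
  rcases ha with h' | h'
  · exact h'.eq_of_length h
  · exact (h'.eq_of_length h.symm).symm

lemma step_lemma {z : ℕ → ℕ} (hz : z ∈ Branches (Tstar S)) {s : List ℕ}
    (hs : z ∈ Cyl (phi S s)) :
    ∃ n, z ∈ Cyl (phi S (s ++ [n])) := by
  set L := (phi S s).length with hL
  -- get a node above s
  have hstep : ∀ K, L < K → ∃ t n₀, s ++ [n₀] <+: t ∧ res z K <+: phi S t := by
    intro K hK
    obtain ⟨t, ht⟩ := hz K
    have hzt : phi S s <+: phi S t := by
      have h1 : phi S s <+: res z K := by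
        rw [← mem_Cyl.mp hs]
        exact res_prefix z (by omega)
      exact h1.trans ht
    have hlen : (phi S s).length < (phi S t).length := by
      have := ht.length_le
      rw [res_length] at this
      omega
    have hcmp : s <+: t ∨ t <+: s :=
      phi_comp htree hnil hgood (s.length + t.length) s t le_rfl hzt
    have hst : s <+: t := by
      rcases hcmp with h | h
      · exact h
      · exfalso
        have := (phi_mono htree hnil hgood h).length_le
        omega
    have hne : s ≠ t := by
      rintro rfl; omega
    obtain ⟨n₀, hn₀⟩ := exists_concat_prefix hst hne
    exact ⟨t, n₀, hn₀, ht⟩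
  obtain ⟨t, n, hn, ht⟩ := hstep (L+1) (by omega)
  refine ⟨n, ?_⟩
  set L' := (phi S (s ++ [n])).length with hL'
  have hLL' : L < L' := phi_concat_length htree hnil hgood s n
  obtain ⟨t₂, n₂, hn₂, ht₂⟩ := hstep L' hLL'
  -- z L = enum S (phi S s) n and also = enum S (phi S s) n₂
  have hzL : ∀ (t' : List ℕ) (n' : ℕ), s ++ [n'] <+: t' → ∀ K, L < K →
      res z K <+: phi S t' → z L = enum S (phi S s) n' := by
    intro t' n' hn' K hK ht'
    have hgetl := phi_prefix_getElem htree hnil hgood n' hn'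
    have hL1 : L < (phi S t').length := by
      have h1 := phi_concat_length htree hnil hgood s n'
      have h2 := (phi_mono htree hnil hgood hn').length_le
      omega
    have hLK : L < K := hK
    have : (res z K)[L]'(by rw [res_length]; omega) = (phi S t')[L]'hL1 :=
      ht'.getElem _
    rw [res_getElem z hLK] at this
    rw [this, hgetl]
  have e1 : z L = enum S (phi S s) n := hzL t n hn (L+1) (by omega) ht
  have e2 : z L = enum S (phi S s) n₂ := hzL t₂ n₂ hn₂ L' hLL' ht₂
  have hnn : n = n₂ := enum_inj (good_phi htree hnil hgood s).2 (e1 ▸ e2)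
  subst hnn
  -- now res z L' = phi S (s ++ [n])
  rw [mem_Cyl]
  have hp1 : phi S (s ++ [n]) <+: phi S t₂ := phi_mono htree hnil hgood hn₂
  have hcmp2 := List.prefix_or_prefix_of_prefix ht₂ hp1
  exact prefix_eq_of_length hcmp2 (by simp)


lemma cyl_nil_phi {z : ℕ → ℕ} (hz : z ∈ Branches (Tstar S)) : z ∈ Cyl (phi S []) := by
  obtain ⟨t, ht⟩ := hz (phi S []).length
  have h1 : phi S [] <+: phi S t := phi_mono htree hnil hgood List.nil_prefix
  have hcmp := List.prefix_or_prefix_of_prefix ht h1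
  rw [mem_Cyl]
  exact prefix_eq_of_length hcmp (by simp)

lemma branches_Tstar_subset : Branches (Tstar S) ⊆ Set.range (ff S) := by
  classical
  intro z hz
  set g : List ℕ → List ℕ := fun s =>
    if h : ∃ n, z ∈ Cyl (phi S (s ++ [n])) then s ++ [h.choose] else s with hg
  set v : ℕ → List ℕ := fun m => g^[m] [] with hv
  have hinv : ∀ m, (v m).length = m ∧ z ∈ Cyl (phi S (v m)) := by
    intro m
    induction m with
    | zero =>
      have hv0 : v 0 = [] := rfl
      rw [hv0]
      exact ⟨rfl, cyl_nil_phi htree hnil hgood hz⟩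
    | succ m ih =>
      have hstep : v (m+1) = g (v m) := Function.iterate_succ_apply' g m []
      have hex : ∃ n, z ∈ Cyl (phi S (v m ++ [n])) :=
        step_lemma htree hnil hgood hz ih.2
      have hgv : g (v m) = v m ++ [hex.choose] := dif_pos hex
      rw [hstep, hgv]
      exact ⟨by simp [ih.1], hex.choose_spec⟩
  set x : ℕ → ℕ := fun i => (v (i+1)).getD i 0 with hx
  have hres : ∀ m, res x m = v m := by
    intro m
    induction m with
    | zero => rw [res_zero]; rfl
    | succ m ih =>
      have hstep : v (m+1) = g (v m) := Function.iterate_succ_apply' g m []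
      have hex : ∃ n, z ∈ Cyl (phi S (v m ++ [n])) :=
        step_lemma htree hnil hgood hz (hinv m).2
      have hgv : v (m+1) = v m ++ [hex.choose] := by rw [hstep]; exact dif_pos hex
      have hxm : x m = hex.choose := by
        show (v (m+1)).getD m 0 = hex.choose
        rw [hgv, List.getD_eq_getElem _ _ (by simp [(hinv m).1])]
        simp [(hinv m).1]
      rw [res_succ, ih, hxm, hgv]
  refine ⟨x, ?_⟩
  funext i
  have hiv := (hinv (i+1)).2
  rw [← hres (i+1)] at hiv
  have hL : i < (phi S (res x (i+1))).length := by
    have := phi_length_ge htree hnil hgood (res x (i+1))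
    rw [res_length] at this
    omega
  rw [ff_getElem htree hnil hgood x hL]
  have := mem_Cyl.mp hiv
  have h2 : (res z (phi S (res x (i+1))).length)[i]'(by rw [res_length]; omega)
      = (phi S (res x (i+1)))[i]'hL := by
    congr 1
  rw [res_getElem z (by omega)] at h2
  exact h2.symm

lemma ff_local {x y : ℕ → ℕ} (i : ℕ) (h : ff S y ∈ Cyl (phi S (res x (i+1)))) :
    res y (i+1) = res x (i+1) := by
  have h1 : ff S y ∈ Cyl (phi S (res y (i+1))) := ff_in_cyl htree hnil hgood y (i+1)
  have hcmp := cyl_comparable h h1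
  have hc2 : res x (i+1) <+: res y (i+1) ∨ res y (i+1) <+: res x (i+1) := by
    rcases hcmp with hc | hc
    · exact phi_comp htree hnil hgood _ _ _ le_rfl hc
    · exact (phi_comp htree hnil hgood _ _ _ le_rfl hc).symm
  exact (prefix_eq_of_length hc2 (by simp)).symm

end Part2c

lemma ff_continuous (S : Set (List ℕ)) : Continuous (ff S) := by
  apply continuous_pi
  intro i
  rw [continuous_iff_continuousAt]
  intro x
  have hev : (fun y => ff S y i) =ᶠ[nhds x] fun _ => ff S x i := by
    filter_upwards [(isOpen_Cyl (res x (i+1))).mem_nhds res_mem_Cyl] with y hy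
    have hyx : res y (i+1) = res x (i+1) := by
      have := mem_Cyl.mp hy
      rwa [res_length] at this
    show (phi S (res y (i+1))).getD i 0 = (phi S (res x (i+1))).getD i 0
    rw [hyx]
  exact continuousAt_const.congr hev.symm

section Homeo
variable {S : Set (List ℕ)}
  (htree : IsTree S) (hnil : [] ∈ S)
  (hgood : ∀ u ∈ S, ∃ t, good S t ∧ u <+: t)
include htree hnil hgood

lemma exists_homeo : Nonempty ((ℕ → ℕ) ≃ₜ (Set.range (ff S))) := by
  have hbij : Function.Bijective
      (fun x => (⟨ff S x, Set.mem_range_self x⟩ : Set.range (ff S))) := by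
    constructor
    · intro a b hab
      exact ff_inj htree hnil hgood (congrArg Subtype.val hab)
    · rintro ⟨y, hy⟩
      obtain ⟨x, rfl⟩ := hy
      exact ⟨x, rfl⟩
  set E := Equiv.ofBijective _ hbij with hE
  refine ⟨Homeomorph.mk E ?_ ?_⟩
  · show Continuous fun x => (⟨ff S x, Set.mem_range_self x⟩ : Set.range (ff S))
    exact (ff_continuous S).subtype_mk _
  · rw [continuous_iff_continuousAt]
    intro y
    apply continuousAt_pi.mpr
    intro i
    set x := E.symm y with hxdef
    have hyx : ff S x = y.val := congrArg Subtype.val (E.apply_symm_apply y)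
    have hUopen : IsOpen (Subtype.val ⁻¹' Cyl (phi S (res x (i+1))) : Set (Set.range (ff S))) :=
      (isOpen_Cyl _).preimage continuous_subtype_val
    have hyU : y ∈ Subtype.val ⁻¹' Cyl (phi S (res x (i+1))) := by
      show y.val ∈ Cyl (phi S (res x (i+1)))
      rw [← hyx]
      exact ff_in_cyl htree hnil hgood x (i+1)
    have hev : (fun y' => E.symm y' i) =ᶠ[nhds y] fun _ => x i := by
      filter_upwards [hUopen.mem_nhds hyU] with y' hy'
      have hy'x : ff S (E.symm y') = y'.val := congrArg Subtype.val (E.apply_symm_apply y')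
      have : ff S (E.symm y') ∈ Cyl (phi S (res x (i+1))) := by rw [hy'x]; exact hy'
      have hre := ff_local htree hnil hgood i this
      exact res_eq_iff.mp hre i (by omega)
    exact continuousAt_const.congr hev.symm

end Homeo
end HW

theorem hurewicz_closed_case (F : Set (ℕ → ℕ)) (hF : IsClosed F)
    (hns : ¬ SigmaCpt F) (S : Set (List ℕ))
    (hS : S = {u | u ∈ treeOf F ∧ ¬ SigmaCpt (F ∩ Cyl u)}) :
    (S.Nonempty ∧ IsTree S ∧ Pruned S ∧
      ∀ u ∈ S, ∃ t ∈ S, u <+: t ∧ {n : ℕ | t ++ [n] ∈ S}.Infinite) ∧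
    ∃ Y : Set (ℕ → ℕ), Y ⊆ F ∧ IsClosed Y ∧ Nonempty ((ℕ → ℕ) ≃ₜ Y) := by
  have htree := HW.S_tree hS
  have hprun := HW.S_pruned hS
  have hinf := HW.S_infbranch hF hS
  have hne := HW.S_nonempty hns hS
  have hnil : [] ∈ S := by
    obtain ⟨s, hs⟩ := hne
    exact HW.tree_prefix_closed htree s hs [] List.nil_prefix
  have hgood : ∀ u ∈ S, ∃ t, HW.good S t ∧ u <+: t := by
    intro u hu
    obtain ⟨t, ht, hut, hinf'⟩ := hinf u hu
    exact ⟨t, ⟨ht, hinf'⟩, hut⟩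
  refine ⟨⟨hne, htree, hprun, hinf⟩, Set.range (HW.ff S), ?_, ?_, ?_⟩
  · rintro _ ⟨x, rfl⟩
    apply HW.branches_treeOf_subset hF
    intro m
    exact ((HW.mem_S_iff hS).mp (HW.ff_branches htree hnil hgood x m)).1
  · have : Set.range (HW.ff S) = Branches (HW.Tstar S) :=
      le_antisymm (HW.range_ff_subset htree hnil hgood)
        (HW.branches_Tstar_subset htree hnil hgood)
    rw [this]
    exact HW.isClosed_Branches _
  · exact HW.exists_homeo htree hnil hgood
end
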